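/- For N random variables each taking values in a set of cardinality K, the binding information satisfies B(X_A) ≤ (N - 1)·(N log K - H(X_A)). -/

import Mathlib

open scoped Classical
open Finset Real

noncomputable section

/-- Probability of the event `X = s` under weights `p` on a finite sample space. -/
def pr {Ω : Type*} [Fintype Ω] (p : Ω → ℝ) {S : Type*} (X : Ω → S) (s : S) : ℝ :=
  ∑ ω, if X ω = s then p ω else 0

/-- Shannon entropy of a finitely-valued random variable `X`. -/
def ent {Ω : Type*} [Fintype Ω] (p : Ω → ℝ) {S : Type*} [Fintype S] (X : Ω → S) : ℝ :=
  ∑ s, Real.negMulLog (pr p X s)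

/-- Conditional entropy `H(X | Y)`. -/
def condEnt {Ω : Type*} [Fintype Ω] (p : Ω → ℝ) {S T : Type*} [Fintype S] [Fintype T]
    (X : Ω → S) (Y : Ω → T) : ℝ :=
  ent p (fun ω => (X ω, Y ω)) - ent p Y

/-- The joint random variable of a finite family. -/
def jointVar {Ω : Type*} {A : Type*} {S : A → Type*} (X : ∀ α, Ω → S α) :
    Ω → ∀ α, S α :=
  fun ω α => X α ω

/-- The tuple of all variables except `α`. -/
def restVar {Ω : Type*} {A : Type*} {S : A → Type*} (X : ∀ α, Ω → S α) (α : A) :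
    Ω → ∀ β : {β : A // β ≠ α}, S β.1 :=
  fun ω β => X β.1 ω

/-- Binding information `B(X_A)`. -/
def bindingInfo {Ω : Type*} [Fintype Ω] (p : Ω → ℝ) {A : Type*} [Fintype A]
    {S : A → Type*} [∀ α, Fintype (S α)] (X : ∀ α, Ω → S α) : ℝ :=
  ent p (jointVar X) - ∑ α, condEnt p (X α) (restVar X α)

/-- Multi-information `I(X_A)`. -/
def multiInfo {Ω : Type*} [Fintype Ω] (p : Ω → ℝ) {A : Type*} [Fintype A]
    {S : A → Type*} [∀ α, Fintype (S α)] (X : ∀ α, Ω → S α) : ℝ :=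
  (∑ α, ent p (X α)) - ent p (jointVar X)

section Aux

variable {Ω : Type*} [Fintype Ω]

lemma pr_nonneg (p : Ω → ℝ) (hp : ∀ ω, 0 ≤ p ω) {S : Type*} (X : Ω → S) (s : S) :
    0 ≤ pr p X s :=
  Finset.sum_nonneg fun ω _ => by by_cases h : X ω = s <;> simp [h, hp ω]

lemma sum_pr (p : Ω → ℝ) (hsum : ∑ ω, p ω = 1) {S : Type*} [Fintype S] (X : Ω → S) :
    ∑ s, pr p X s = 1 := by
  rw [← hsum]
  unfold pr
  rw [Finset.sum_comm]
  exact Finset.sum_congr rfl fun ω _ => by simp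

lemma ent_le_log_card (p : Ω → ℝ) (hp : ∀ ω, 0 ≤ p ω) (hsum : ∑ ω, p ω = 1)
    {S : Type*} [Fintype S] (X : Ω → S) :
    ent p X ≤ Real.log (Fintype.card S) := by
  have hq : ∀ s, 0 ≤ pr p X s := pr_nonneg p hp X
  have hq1 : ∑ s, pr p X s = 1 := sum_pr p hsum X
  have hS : Nonempty S := by
    by_contra h
    rw [not_nonempty_iff] at h
    simp [Finset.univ_eq_empty] at hq1
  have hn : (0:ℝ) < (Fintype.card S : ℝ) := by
    exact_mod_cast Fintype.card_pos
  set n : ℝ := (Fintype.card S : ℝ) with hn_def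
  have jensen := concaveOn_negMulLog.le_map_sum (t := Finset.univ) (w := fun _ : S => 1/n)
    (p := fun s => pr p X s) (fun s _ => by positivity)
    (by rw [Finset.sum_const, Finset.card_univ, nsmul_eq_mul, ← hn_def]; field_simp) (fun s _ => hq s)
  have h1 : ∑ s : S, (1/n) • Real.negMulLog (pr p X s) = (1/n) * ent p X := by
    rw [ent, Finset.mul_sum]
    exact Finset.sum_congr rfl fun s _ => by simp [smul_eq_mul]
  have h2 : (∑ s : S, (1/n) • pr p X s) = 1/n := by
    simp only [smul_eq_mul, ← Finset.mul_sum, hq1, mul_one]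
  rw [h1, h2] at jensen
  have h3 : Real.negMulLog (1/n) = (1/n) * Real.log n := by
    rw [Real.negMulLog, one_div, Real.log_inv]; ring
  rw [h3] at jensen
  have := mul_le_mul_of_nonneg_left jensen (le_of_lt hn)
  calc ent p X = n * ((1/n) * ent p X) := by field_simp
    _ ≤ n * ((1/n) * Real.log n) := this
    _ = Real.log n := by field_simp

lemma ent_comp_equiv (p : Ω → ℝ) {S T : Type*} [Fintype S] [Fintype T]
    (e : S ≃ T) (X : Ω → S) :
    ent p (fun ω => e (X ω)) = ent p X := by
  unfold ent
  rw [← e.sum_comp (fun t => Real.negMulLog (pr p (fun ω => e (X ω)) t))]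
  refine Finset.sum_congr rfl fun s _ => ?_
  congr 1
  unfold pr
  exact Finset.sum_congr rfl fun ω _ => by simp [e.injective.eq_iff]

end Aux

/-- `B(X_A) ≤ (N - 1)(N log K - H(X_A))`. -/
theorem bindingInfo_le_bound {Ω : Type*} [Fintype Ω] (p : Ω → ℝ)
    (hp : ∀ ω, 0 ≤ p ω) (hsum : ∑ ω, p ω = 1)
    {A : Type*} [Fintype A] (hA : 1 ≤ Fintype.card A)
    {S : A → Type*} [∀ α, Fintype (S α)]
    (K : ℕ) (hK : ∀ α, Fintype.card (S α) = K)
    (X : ∀ α, Ω → S α) :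
    bindingInfo p X ≤ ((Fintype.card A : ℝ) - 1) *
      ((Fintype.card A : ℝ) * Real.log K - ent p (jointVar X)) := by
  classical
  have hAne : Nonempty A := Fintype.card_pos_iff.mp hA
  obtain ⟨α0⟩ := hAne
  set N := Fintype.card A with hN
  have hcond : ∀ α, condEnt p (X α) (restVar X α) =
      ent p (jointVar X) - ent p (restVar X α) := by
    intro α
    unfold condEnt
    have : ent p (fun ω => (X α ω, restVar X α ω)) = ent p (jointVar X) :=
      ent_comp_equiv p (Equiv.piSplitAt α S) (jointVar X)
    rw [this]
  have hbind : bindingInfo p X =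
      (∑ α, ent p (restVar X α)) - ((N : ℝ) - 1) * ent p (jointVar X) := by
    unfold bindingInfo
    simp only [hcond]
    rw [Finset.sum_sub_distrib, Finset.sum_const, Finset.card_univ, nsmul_eq_mul]
    ring
  rw [hbind]
  have hrest : ∀ α : A, ent p (restVar X α) ≤ ((N : ℝ) - 1) * Real.log K := by
    intro α
    have hcard : Fintype.card (∀ β : {β : A // β ≠ α}, S β.1) = K ^ (N - 1) := by
      rw [Fintype.card_pi]
      have hc : Fintype.card {β : A // β ≠ α} = N - 1 := by
        rw [Fintype.card_subtype_compl, Fintype.card_subtype_eq]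
      calc (∏ β : {β : A // β ≠ α}, Fintype.card (S β.1))
          = ∏ _β : {β : A // β ≠ α}, K := Finset.prod_congr rfl fun β _ => hK β.1
        _ = K ^ (N - 1) := by rw [Finset.prod_const, Finset.card_univ, hc]
    have h := ent_le_log_card p hp hsum (restVar X α)
    rw [hcard] at h
    have hcast : ((N - 1 : ℕ) : ℝ) = (N : ℝ) - 1 := by
      push_cast [Nat.cast_sub hA]
      ring
    calc ent p (restVar X α) ≤ Real.log ((K : ℝ) ^ (N - 1) : ℝ) := by
          exact_mod_cast h
      _ = ((N : ℝ) - 1) * Real.log K := by rw [Real.log_pow, hcast]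
  have hsum' : (∑ α, ent p (restVar X α)) ≤ (N : ℝ) * (((N : ℝ) - 1) * Real.log K) := by
    calc (∑ α, ent p (restVar X α)) ≤ ∑ _α : A, ((N : ℝ) - 1) * Real.log K :=
          Finset.sum_le_sum fun α _ => hrest α
      _ = (N : ℝ) * (((N : ℝ) - 1) * Real.log K) := by
          rw [Finset.sum_const, Finset.card_univ, nsmul_eq_mul]
  nlinarith [hsum']
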